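/- Let S be a finite set with |S| = s ≥ 6. For a non-negative integer t, there exists an inclusion-minimal non-Bondy system 𝒜 on S with |𝒜| = t if and only if s + 1 ≤ t ≤ 2s. -/

import Mathlib

def IsBondy {α : Type*} [DecidableEq α] (S : Finset α) (𝒜 : Finset (Finset α)) : Prop :=
  ∃ a ∈ S, ∀ A ∈ 𝒜, insert a A ∈ 𝒜 → a ∈ A

section AuxBondy

variable {α : Type*} [DecidableEq α]

open Finset Submodule Module

noncomputable def chi (A : Finset α) : α →₀ ℚ := ∑ x ∈ A, Finsupp.single x 1

lemma nonBondy_lower (S : Finset α) (𝒜 : Finset (Finset α))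
    (hS : S.Nonempty)
    (h : ∀ a ∈ S, ∃ A ∈ 𝒜, insert a A ∈ 𝒜 ∧ a ∉ A) :
    S.card + 1 ≤ 𝒜.card := by
  classical
  obtain ⟨a0, ha0⟩ := hS
  obtain ⟨A₀, hA₀, -, -⟩ := h a0 ha0
  set g : α → (α →₀ ℚ) := fun a => Finsupp.single a 1 with hg
  set φ : Finset α → (α →₀ ℚ) := chi with hφ
  set W : Finset (α →₀ ℚ) := (𝒜.image (fun A => φ A - φ A₀)).erase 0 with hW
  have hWcard : W.card + 1 ≤ 𝒜.card := by
    have h0 : (0:(α →₀ ℚ)) ∈ 𝒜.image (fun A => φ A - φ A₀) := by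
      exact mem_image.2 ⟨A₀, hA₀, by simp⟩
    have hc : W.card = (𝒜.image (fun A => φ A - φ A₀)).card - 1 := by
      rw [hW]; exact Finset.card_erase_of_mem h0
    have hle := Finset.card_image_le (s := 𝒜) (f := fun A => φ A - φ A₀)
    have hpos : 0 < (𝒜.image (fun A => φ A - φ A₀)).card :=
      Finset.card_pos.2 ⟨0, h0⟩
    omega
  have hmemspan : ∀ B ∈ 𝒜, φ B - φ A₀ ∈ span ℚ (W : Set (α →₀ ℚ)) := by
    intro B hB
    by_cases hz : φ B - φ A₀ = 0
    · rw [hz]; exact zero_mem _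
    · refine subset_span ?_
      rw [hW]
      exact Finset.mem_coe.2 (Finset.mem_erase.2 ⟨hz, mem_image.2 ⟨B, hB, rfl⟩⟩)
  have hginspan : ∀ a ∈ S, g a ∈ span ℚ (W : Set (α →₀ ℚ)) := by
    intro a ha
    obtain ⟨A, hA, hiA, haA⟩ := h a ha
    have : φ (insert a A) = g a + φ A := by
      simp [hφ, chi, Finset.sum_insert haA, hg]
    have : g a = (φ (insert a A) - φ A₀) - (φ A - φ A₀) := by
      rw [this]; abel
    rw [this]
    exact sub_mem (hmemspan _ hiA) (hmemspan _ hA)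
  have hginj : Function.Injective g := fun a b hab => by
    simpa using (Finsupp.single_left_injective (one_ne_zero)) hab
  set GS : Finset (α →₀ ℚ) := S.image g with hGS
  have hli : LinearIndependent ℚ ((↑) : ↥(GS : Set (α →₀ ℚ)) → (α →₀ ℚ)) := by
    have h1 : LinearIndependent ℚ g := by
      have := (Finsupp.basisSingleOne (R := ℚ) (ι := α)).linearIndependent
      simpa [hg, Finsupp.coe_basisSingleOne] using this
    have h2 := (linearIndepOn_id_range_iff hginj).2 h1
    refine h2.mono ?_
    intro v hv
    rw [hGS] at hv
    simp only [Finset.coe_image, Set.mem_image, Finset.mem_coe] at hv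
    obtain ⟨a, _, rfl⟩ := hv
    exact Set.mem_range_self a
  have hcard1 : finrank ℚ (span ℚ (GS : Set (α →₀ ℚ))) = S.card := by
    rw [finrank_span_finset_eq_card hli, hGS, Finset.card_image_of_injective _ hginj]
  have hsub : span ℚ (GS : Set (α →₀ ℚ)) ≤ span ℚ (W : Set (α →₀ ℚ)) := by
    rw [span_le]
    intro v hv
    rw [hGS] at hv
    simp only [Finset.coe_image, Set.mem_image, Finset.mem_coe] at hv
    obtain ⟨a, ha, rfl⟩ := hv
    exact hginspan a ha
  have hrank := Submodule.finrank_mono hsub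
  rw [hcard1] at hrank
  have hWrank := finrank_span_finset_le_card (R := ℚ) W
  unfold Set.finrank at hWrank
  omega


lemma minimal_upper {α : Type*} [DecidableEq α] (S : Finset α) (𝒜 : Finset (Finset α))
    (hnb : ¬ IsBondy S 𝒜) (hmin : ∀ ℬ ⊆ 𝒜, ¬ IsBondy S ℬ → ℬ = 𝒜) :
    𝒜.card ≤ 2 * S.card := by
  classical
  have h : ∀ a ∈ S, ∃ A ∈ 𝒜, insert a A ∈ 𝒜 ∧ a ∉ A := by
    intro a ha
    by_contra hc
    push_neg at hc
    exact hnb ⟨a, ha, hc⟩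
  set E : {a // a ∈ S} → Finset α := fun a => (h a.1 a.2).choose with hE
  have hEspec : ∀ a : {a // a ∈ S}, E a ∈ 𝒜 ∧ insert a.1 (E a) ∈ 𝒜 ∧ a.1 ∉ E a :=
    fun a => (h a.1 a.2).choose_spec
  set ℬ : Finset (Finset α) := S.attach.biUnion (fun a => {E a, insert a.1 (E a)}) with hB
  have hsub : ℬ ⊆ 𝒜 := by
    intro A hA
    rw [hB] at hA
    simp only [Finset.mem_biUnion, Finset.mem_insert, Finset.mem_singleton] at hA
    obtain ⟨a, -, rfl | rfl⟩ := hA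
    · exact (hEspec a).1
    · exact (hEspec a).2.1
  have hBnb : ¬ IsBondy S ℬ := by
    rintro ⟨a, ha, hgood⟩
    refine (hEspec ⟨a, ha⟩).2.2 (hgood (E ⟨a, ha⟩) ?_ ?_)
    · rw [hB]
      exact Finset.mem_biUnion.2 ⟨⟨a, ha⟩, Finset.mem_attach _ _, by simp⟩
    · rw [hB]
      exact Finset.mem_biUnion.2 ⟨⟨a, ha⟩, Finset.mem_attach _ _, by simp⟩
  have heq := hmin ℬ hsub hBnb
  calc 𝒜.card = ℬ.card := by rw [heq]
    _ ≤ ∑ a ∈ S.attach, ({E a, insert a.1 (E a)} : Finset (Finset α)).card :=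
        Finset.card_biUnion_le
    _ ≤ ∑ _a ∈ S.attach, 2 := Finset.sum_le_sum (fun a _ => Finset.card_insert_le _ _)
    _ = 2 * S.card := by simp [Finset.card_attach, mul_comm]


section Helpers

variable {n : ℕ}

lemma zmodcast_inj (hn : 6 ≤ n) {a b : ℕ} (ha : a < 6) (hb : b < 6)
    (h : (a : ZMod n) = b) : a = b := by
  haveI : NeZero n := ⟨by omega⟩
  have := congrArg ZMod.val h
  rwa [ZMod.val_cast_of_lt (by omega), ZMod.val_cast_of_lt (by omega)] at this

end Helpers

section Construction

variable {α : Type*} [DecidableEq α]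

lemma construction (S : Finset α) (hs : 6 ≤ S.card) (m : ℕ) (hm : m + 1 ≤ S.card) :
    ∃ 𝒜 : Finset (Finset α), (∀ A ∈ 𝒜, A ⊆ S) ∧ ¬ IsBondy S 𝒜 ∧
      (∀ ℬ ⊆ 𝒜, ¬ IsBondy S ℬ → ℬ = 𝒜) ∧ 𝒜.card = S.card + 1 + m := by
  classical
  set n := S.card with hn
  haveI : NeZero n := ⟨by omega⟩
  set x : ZMod n → α := fun i => (S.equivFin.symm ⟨i.val, ZMod.val_lt i⟩ : {a // a ∈ S}).1
    with hx
  have hxS : ∀ i, x i ∈ S := fun i => (S.equivFin.symm ⟨i.val, ZMod.val_lt i⟩).2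
  have hxinj : Function.Injective x := by
    intro i j hij
    apply ZMod.val_injective n
    have h1 := S.equivFin.symm.injective (Subtype.ext hij)
    exact congrArg Fin.val h1
  set D : ZMod n → Finset α := fun i => {x (i+1), x (i+2), x (i+4)} with hD
  set T : ZMod n → Finset α := fun i => insert (x i) (D i) with hT
  -- key subset lemma
  have lemC : ∀ i j : ZMod n, D i ⊆ T j → i = j := by
    intro i j hsub
    have m1 : x (i+1) ∈ T j := hsub (by simp [hD])
    have m2 : x (i+2) ∈ T j := hsub (by simp [hD])
    have m3 : x (i+4) ∈ T j := hsub (by simp [hD])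
    simp only [hT, hD, Finset.mem_insert, Finset.mem_singleton, hxinj.eq_iff] at m1 m2 m3
    have contra : ∀ {a b : ℕ}, a < 6 → b < 6 → a ≠ b → (a : ZMod n) = (b : ZMod n) → i = j :=
      fun ha hb hab h => absurd (zmodcast_inj hs ha hb h) hab
    rcases m1 with h1 | h1 | h1 | h1
    · -- i + 1 = j
      rcases m3 with h3 | h3 | h3 | h3
      · exact contra (a := 3) (b := 0) (by norm_num) (by norm_num) (by norm_num)
          (by push_cast; linear_combination h3 - h1)
      · exact contra (a := 3) (b := 1) (by norm_num) (by norm_num) (by norm_num)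
          (by push_cast; linear_combination h3 - h1)
      · exact contra (a := 3) (b := 2) (by norm_num) (by norm_num) (by norm_num)
          (by push_cast; linear_combination h3 - h1)
      · exact contra (a := 3) (b := 4) (by norm_num) (by norm_num) (by norm_num)
          (by push_cast; linear_combination h3 - h1)
    · -- i + 1 = j + 1
      exact add_right_cancel h1
    · -- i + 1 = j + 2
      rcases m2 with h2 | h2 | h2 | h2
      · exact contra (a := 3) (b := 0) (by norm_num) (by norm_num) (by norm_num)
          (by push_cast; linear_combination h2 - h1 + h1 - h1)
      · exact contra (a := 3) (b := 1) (by norm_num) (by norm_num) (by norm_num)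
          (by push_cast; linear_combination h2 - h1)
      · exact contra (a := 3) (b := 2) (by norm_num) (by norm_num) (by norm_num)
          (by push_cast; linear_combination h2 - h1)
      · exact contra (a := 3) (b := 4) (by norm_num) (by norm_num) (by norm_num)
          (by push_cast; linear_combination h2 - h1)
    · -- i + 1 = j + 4
      rcases m2 with h2 | h2 | h2 | h2
      · exact contra (a := 5) (b := 0) (by norm_num) (by norm_num) (by norm_num)
          (by push_cast; linear_combination h2 - h1)
      · exact contra (a := 5) (b := 1) (by norm_num) (by norm_num) (by norm_num)
          (by push_cast; linear_combination h2 - h1)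
      · exact contra (a := 5) (b := 2) (by norm_num) (by norm_num) (by norm_num)
          (by push_cast; linear_combination h2 - h1)
      · exact contra (a := 5) (b := 4) (by norm_num) (by norm_num) (by norm_num)
          (by push_cast; linear_combination h2 - h1)

  have bad : ∀ {a b : ℕ}, a < 6 → b < 6 → a ≠ b → (a : ZMod n) = (b : ZMod n) → False :=
    fun ha hb hab h => absurd (zmodcast_inj hs ha hb h) hab
  have hDT : ∀ i, D i ⊆ T i := fun i => Finset.subset_insert _ _
  have hDinj : ∀ i j : ZMod n, D i = D j → i = j := by
    intro i j h
    exact lemC i j (h ▸ hDT j)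
  have hTinj : ∀ i j : ZMod n, T i = T j → i = j := by
    intro i j h
    exact lemC i j (h ▸ hDT i)
  have hxDi : ∀ i, x i ∉ D i := by
    intro i hmem
    simp only [hD, Finset.mem_insert, Finset.mem_singleton, hxinj.eq_iff] at hmem
    rcases hmem with h | h | h
    · exact bad (a := 0) (b := 1) (by norm_num) (by norm_num) (by norm_num)
        (by push_cast; linear_combination h)
    · exact bad (a := 0) (b := 2) (by norm_num) (by norm_num) (by norm_num)
        (by push_cast; linear_combination h)
    · exact bad (a := 0) (b := 4) (by norm_num) (by norm_num) (by norm_num)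
        (by push_cast; linear_combination h)
  have cardD : ∀ i, (D i).card = 3 := by
    intro i
    rw [hD]
    rw [Finset.card_insert_of_notMem, Finset.card_insert_of_notMem, Finset.card_singleton]
    · simp only [Finset.mem_singleton, hxinj.eq_iff]
      intro h
      exact bad (a := 2) (b := 4) (by norm_num) (by norm_num) (by norm_num)
        (by push_cast; linear_combination h)
    · simp only [Finset.mem_insert, Finset.mem_singleton, hxinj.eq_iff]
      rintro (h | h)
      · exact bad (a := 1) (b := 2) (by norm_num) (by norm_num) (by norm_num)
          (by push_cast; linear_combination h)
      · exact bad (a := 1) (b := 4) (by norm_num) (by norm_num) (by norm_num)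
          (by push_cast; linear_combination h)
  have cardT : ∀ i, (T i).card = 4 := by
    intro i
    rw [hT, Finset.card_insert_of_notMem (hxDi i), cardD]
  set Zi : Finset (ZMod n) := (Finset.range m).image (Nat.cast : ℕ → ZMod n) with hZi
  have cardZi : Zi.card = m := by
    rw [hZi, Finset.card_image_of_injOn, Finset.card_range]
    intro a ha b hb hab
    rw [Finset.mem_coe, Finset.mem_range] at ha hb
    have := congrArg ZMod.val hab
    rwa [ZMod.val_cast_of_lt (by omega), ZMod.val_cast_of_lt (by omega)] at this
  set Zα : Finset α := Zi.image x with hZα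
  have cardZα : Zα.card = m := by
    rw [hZα, Finset.card_image_of_injective _ hxinj, cardZi]
  have hZαS : Zα ⊆ S := by
    intro a ha
    rw [hZα] at ha
    obtain ⟨i, -, rfl⟩ := Finset.mem_image.1 ha
    exact hxS i
  set 𝒜 : Finset (Finset α) :=
    insert ∅ (((S \ Zα).image (fun a => ({a} : Finset α))) ∪ (Zi.image D ∪ Zi.image T))
    with h𝒜
  have mem𝒜 : ∀ {A : Finset α}, A ∈ 𝒜 ↔
      A = ∅ ∨ (∃ b, (b ∈ S ∧ b ∉ Zα) ∧ A = {b}) ∨ (∃ i ∈ Zi, A = D i) ∨ (∃ i ∈ Zi, A = T i) := by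
    intro A
    simp only [h𝒜, Finset.mem_insert, Finset.mem_union, Finset.mem_image, Finset.mem_sdiff]
    constructor
    · rintro (rfl | ⟨b, hb, rfl⟩ | ⟨i, hi, rfl⟩ | ⟨i, hi, rfl⟩)
      · exact Or.inl rfl
      · exact Or.inr (Or.inl ⟨b, hb, rfl⟩)
      · exact Or.inr (Or.inr (Or.inl ⟨i, hi, rfl⟩))
      · exact Or.inr (Or.inr (Or.inr ⟨i, hi, rfl⟩))
    · rintro (rfl | ⟨b, hb, rfl⟩ | ⟨i, hi, rfl⟩ | ⟨i, hi, rfl⟩)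
      · exact Or.inl rfl
      · exact Or.inr (Or.inl ⟨b, hb, rfl⟩)
      · exact Or.inr (Or.inr (Or.inl ⟨i, hi, rfl⟩))
      · exact Or.inr (Or.inr (Or.inr ⟨i, hi, rfl⟩))
  -- all members are subsets of S
  have hsubS : ∀ A ∈ 𝒜, A ⊆ S := by
    intro A hA
    rcases mem𝒜.1 hA with rfl | ⟨b, ⟨hbS, -⟩, rfl⟩ | ⟨i, -, rfl⟩ | ⟨i, -, rfl⟩
    · exact Finset.empty_subset _
    · simpa using hbS
    · rw [hD]
      intro y hy
      simp only [Finset.mem_insert, Finset.mem_singleton] at hy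
      rcases hy with rfl | rfl | rfl <;> exact hxS _
    · rw [hT]
      intro y hy
      simp only [Finset.mem_insert] at hy
      rcases hy with rfl | hy
      · exact hxS _
      · rw [hD] at hy
        simp only [Finset.mem_insert, Finset.mem_singleton] at hy
        rcases hy with rfl | rfl | rfl <;> exact hxS _
  -- cardinality
  have card𝒜 : 𝒜.card = n + 1 + m := by
    rw [h𝒜]
    rw [Finset.card_insert_of_notMem, Finset.card_union_of_disjoint, Finset.card_union_of_disjoint]
    · have c1 : ((S \ Zα).image (fun a => ({a} : Finset α))).card = n - m := by
        rw [Finset.card_image_of_injOn (fun a _ b _ h => Finset.singleton_injective h),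
          Finset.card_sdiff_of_subset hZαS, cardZα]
      have c2 : (Zi.image D).card = m := by
        rw [Finset.card_image_of_injOn (fun i _ j _ h => hDinj i j h), cardZi]
      have c3 : (Zi.image T).card = m := by
        rw [Finset.card_image_of_injOn (fun i _ j _ h => hTinj i j h), cardZi]
      rw [c1, c2, c3]
      omega
    · rw [Finset.disjoint_left]
      rintro A hA hA'
      obtain ⟨i, -, rfl⟩ := Finset.mem_image.1 hA
      obtain ⟨j, -, hj⟩ := Finset.mem_image.1 hA'
      have := congrArg Finset.card hj
      rw [cardT, cardD] at this
      omega
    · rw [Finset.disjoint_left]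
      rintro A hA hA'
      obtain ⟨b, -, rfl⟩ := Finset.mem_image.1 hA
      rcases Finset.mem_union.1 hA' with h' | h'
      · obtain ⟨i, -, hi⟩ := Finset.mem_image.1 h'
        have := congrArg Finset.card hi
        rw [cardD, Finset.card_singleton] at this
        omega
      · obtain ⟨i, -, hi⟩ := Finset.mem_image.1 h'
        have := congrArg Finset.card hi
        rw [cardT, Finset.card_singleton] at this
        omega
    · intro h
      rcases Finset.mem_union.1 h with h' | h'
      · obtain ⟨b, -, hb⟩ := Finset.mem_image.1 h'
        exact Finset.singleton_ne_empty b hb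
      · rcases Finset.mem_union.1 h' with h'' | h''
        · obtain ⟨i, -, hi⟩ := Finset.mem_image.1 h''
          have := congrArg Finset.card hi
          rw [cardD, Finset.card_empty] at this
          omega
        · obtain ⟨i, -, hi⟩ := Finset.mem_image.1 h''
          have := congrArg Finset.card hi
          rw [cardT, Finset.card_empty] at this
          omega
  -- edge characterization
  have edgechar : ∀ A a, A ∈ 𝒜 → a ∉ A → insert a A ∈ 𝒜 →
      (A = ∅ ∧ a ∈ S ∧ a ∉ Zα) ∨ (∃ i ∈ Zi, A = D i ∧ a = x i) := by
    intro A a hA haA hins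
    rcases mem𝒜.1 hA with rfl | ⟨b, ⟨hbS, hbZ⟩, rfl⟩ | ⟨i, hi, rfl⟩ | ⟨i, hi, rfl⟩
    · -- A = ∅
      rcases mem𝒜.1 hins with h | ⟨b, hb, h⟩ | ⟨i, -, h⟩ | ⟨i, -, h⟩
      · exact absurd h (by simp)
      · rw [show insert a ∅ = ({a} : Finset α) from rfl] at h
        obtain rfl := Finset.singleton_injective h
        exact Or.inl ⟨rfl, hb.1, hb.2⟩
      · have := congrArg Finset.card h
        rw [cardD] at this
        simp at this
      · have := congrArg Finset.card h
        rw [cardT] at this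
        simp at this
    · -- A = {b}
      exfalso
      have hcard : (insert a ({b} : Finset α)).card = 2 := by
        rw [Finset.card_insert_of_notMem haA, Finset.card_singleton]
      rcases mem𝒜.1 hins with h | ⟨c, -, h⟩ | ⟨i, -, h⟩ | ⟨i, -, h⟩
      · rw [h] at hcard; simp at hcard
      · rw [h] at hcard; simp at hcard
      · rw [h, cardD] at hcard; omega
      · rw [h, cardT] at hcard; omega
    · -- A = D i
      have hcard : (insert a (D i)).card = 4 := by
        rw [Finset.card_insert_of_notMem haA, cardD]
      rcases mem𝒜.1 hins with h | ⟨c, -, h⟩ | ⟨j, -, h⟩ | ⟨j, -, h⟩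
      · rw [h] at hcard; simp at hcard
      · rw [h] at hcard; simp at hcard
      · rw [h, cardD] at hcard; omega
      · -- insert a (D i) = T j
        have hsubij : D i ⊆ T j := by
          rw [← h]
          exact Finset.subset_insert _ _
        obtain rfl := lemC i j hsubij
        have haT : a ∈ T i := by
          rw [← h]
          exact Finset.mem_insert_self _ _
        rw [hT] at haT
        rcases Finset.mem_insert.1 haT with rfl | haD
        · exact Or.inr ⟨i, hi, rfl, rfl⟩
        · exact absurd haD haA
    · -- A = T i
      exfalso
      have hcard : (insert a (T i)).card = 5 := by
        rw [Finset.card_insert_of_notMem haA, cardT]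
      rcases mem𝒜.1 hins with h | ⟨c, -, h⟩ | ⟨j, -, h⟩ | ⟨j, -, h⟩
      · rw [h] at hcard; simp at hcard
      · rw [h] at hcard; simp at hcard
      · rw [h, cardD] at hcard; omega
      · rw [h, cardT] at hcard; omega
  -- non-Bondy
  have hnb : ¬ IsBondy S 𝒜 := by
    rintro ⟨a, haS, hgood⟩
    by_cases haZ : a ∈ Zα
    · rw [hZα] at haZ
      obtain ⟨i, hi, rfl⟩ := Finset.mem_image.1 haZ
      have h1 : D i ∈ 𝒜 := mem𝒜.2 (Or.inr (Or.inr (Or.inl ⟨i, hi, rfl⟩)))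
      have h2 : insert (x i) (D i) ∈ 𝒜 := mem𝒜.2 (Or.inr (Or.inr (Or.inr ⟨i, hi, rfl⟩)))
      exact hxDi i (hgood (D i) h1 h2)
    · have h1 : (∅ : Finset α) ∈ 𝒜 := mem𝒜.2 (Or.inl rfl)
      have h2 : insert a ∅ ∈ 𝒜 := mem𝒜.2 (Or.inr (Or.inl ⟨a, ⟨haS, haZ⟩, rfl⟩))
      exact absurd (hgood ∅ h1 h2) (Finset.notMem_empty a)
  -- minimality
  have hmin : ∀ ℬ ⊆ 𝒜, ¬ IsBondy S ℬ → ℬ = 𝒜 := by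
    intro ℬ hsub hnbB
    by_contra hne
    obtain ⟨B, hB𝒜, hBℬ⟩ := Finset.exists_of_ssubset (lt_of_le_of_ne hsub hne)
    apply hnbB
    rcases mem𝒜.1 hB𝒜 with rfl | ⟨b, ⟨hbS, hbZ⟩, rfl⟩ | ⟨i, hi, rfl⟩ | ⟨i, hi, rfl⟩
    · -- B = ∅
      have hSZ : (S \ Zα).Nonempty := by
        rw [← Finset.card_pos, Finset.card_sdiff_of_subset hZαS, cardZα]
        omega
      obtain ⟨b, hb⟩ := hSZ
      rw [Finset.mem_sdiff] at hb
      refine ⟨b, hb.1, fun A hA hins => ?_⟩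
      by_contra hbA
      rcases edgechar A b (hsub hA) hbA (hsub hins) with ⟨rfl, -⟩ | ⟨i, hi, -, rfl⟩
      · exact hBℬ hA
      · exact hb.2 (by rw [hZα]; exact Finset.mem_image.2 ⟨i, hi, rfl⟩)
    · -- B = {b}
      refine ⟨b, hbS, fun A hA hins => ?_⟩
      by_contra hbA
      rcases edgechar A b (hsub hA) hbA (hsub hins) with ⟨rfl, -⟩ | ⟨i, hi, -, rfl⟩
      · exact hBℬ (by simpa using hins)
      · exact hbZ (by rw [hZα]; exact Finset.mem_image.2 ⟨i, hi, rfl⟩)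
    · -- B = D i
      refine ⟨x i, hxS i, fun A hA hins => ?_⟩
      by_contra hxA
      rcases edgechar A (x i) (hsub hA) hxA (hsub hins) with ⟨-, -, hZ⟩ | ⟨j, hj, rfl, hxij⟩
      · exact hZ (by rw [hZα]; exact Finset.mem_image.2 ⟨i, hi, rfl⟩)
      · obtain rfl := hxinj hxij
        exact hBℬ hA
    · -- B = T i
      refine ⟨x i, hxS i, fun A hA hins => ?_⟩
      by_contra hxA
      rcases edgechar A (x i) (hsub hA) hxA (hsub hins) with ⟨-, -, hZ⟩ | ⟨j, hj, rfl, hxij⟩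
      · exact hZ (by rw [hZα]; exact Finset.mem_image.2 ⟨i, hi, rfl⟩)
      · obtain rfl := hxinj hxij
        exact hBℬ hins
  exact ⟨𝒜, hsubS, hnb, hmin, by rw [card𝒜]⟩

end Construction


end AuxBondy

theorem min_nonBondy_card_iff {α : Type*} [DecidableEq α] (S : Finset α)
    (hs : 6 ≤ S.card) (t : ℕ) :
    (∃ 𝒜 : Finset (Finset α), (∀ A ∈ 𝒜, A ⊆ S) ∧ ¬ IsBondy S 𝒜 ∧
        (∀ ℬ ⊆ 𝒜, ¬ IsBondy S ℬ → ℬ = 𝒜) ∧ 𝒜.card = t) ↔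
      S.card + 1 ≤ t ∧ t ≤ 2 * S.card := by
  constructor
  · rintro ⟨𝒜, hsubS, hnb, hmin, rfl⟩
    have hS : S.Nonempty := Finset.card_pos.1 (by omega)
    have h : ∀ a ∈ S, ∃ A ∈ 𝒜, insert a A ∈ 𝒜 ∧ a ∉ A := by
      intro a ha
      by_contra hc
      push_neg at hc
      exact hnb ⟨a, ha, hc⟩
    exact ⟨nonBondy_lower S 𝒜 hS h, minimal_upper S 𝒜 hnb hmin⟩
  · rintro ⟨h1, h2⟩
    obtain ⟨𝒜, ha, hb, hc, hd⟩ := construction S hs (t - S.card - 1) (by omega)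
    exact ⟨𝒜, ha, hb, hc, by omega⟩
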